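/- The simplex method with the largest distance rule applied to min c^⊤x s.t. Ax = b, x ≥ 0 (with rank A = m, primal and dual optimal basic solutions existing, and a non-optimal initial BFS) generates at most (n − m) · ⌈(mγ/(βδ)) · log(mγ/δ)⌉ different basic feasible solutions. -/

import Mathlib

open Matrix Finset

/-- The Euclidean norm of the `j`-th column of `A`. -/
noncomputable def colNorm {m n : ℕ} (A : Matrix (Fin m) (Fin n) ℝ) (j : Fin n) : ℝ :=
  Real.sqrt (∑ i, A i j ^ 2)

/-- `bas` selects an invertible `m × m` submatrix of `A` (a basis). -/
def IsBasis {m n : ℕ} (A : Matrix (Fin m) (Fin n) ℝ) (bas : Fin m → Fin n) : Prop :=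
  Function.Injective bas ∧ IsUnit (A.submatrix id bas)

/-- `x` is a basic feasible solution of `A x = b`, `x ≥ 0`. -/
def IsBasicFeasible {m n : ℕ} (A : Matrix (Fin m) (Fin n) ℝ) (b : Fin m → ℝ)
    (x : Fin n → ℝ) : Prop :=
  (∃ bas : Fin m → Fin n, IsBasis A bas ∧ ∀ j, j ∉ Set.range bas → x j = 0) ∧
    A *ᵥ x = b ∧ 0 ≤ x

/-- `x'` is obtained from the basic feasible solution `x` by one pivot of the simplex
method with the largest distance rule: for some basis `bas` of `x`, simplex multipliers
`y` (so the reduced costs are `c̄_j = c_j − (Aᵀ y)_j`), and entering index `jl`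
minimizing `c̄_j / ‖a_j‖` over the nonbasis with `c̄_{jl} < 0`, the new point `x'` is
feasible, vanishes on the nonbasis except at `jl`, and takes the maximal step (minimal
objective value) on that ray. -/
def LDPivot {m n : ℕ} (A : Matrix (Fin m) (Fin n) ℝ) (b : Fin m → ℝ) (c : Fin n → ℝ)
    (x x' : Fin n → ℝ) : Prop :=
  ∃ (bas : Fin m → Fin n) (y : Fin m → ℝ) (jl : Fin n),
    IsBasis A bas ∧ (∀ j, j ∉ Set.range bas → x j = 0) ∧ A *ᵥ x = b ∧ 0 ≤ x ∧
    ((A.submatrix id bas)ᵀ *ᵥ y = fun i => c (bas i)) ∧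
    jl ∉ Set.range bas ∧ c jl - (Aᵀ *ᵥ y) jl < 0 ∧
    (∀ j, j ∉ Set.range bas →
      (c jl - (Aᵀ *ᵥ y) jl) / colNorm A jl ≤ (c j - (Aᵀ *ᵥ y) j) / colNorm A j) ∧
    A *ᵥ x' = b ∧ 0 ≤ x' ∧ (∀ j, j ∉ Set.range bas → j ≠ jl → x' j = 0) ∧
    (∀ x'', A *ᵥ x'' = b → 0 ≤ x'' → (∀ j, j ∉ Set.range bas → j ≠ jl → x'' j = 0) →
      c ⬝ᵥ x' ≤ c ⬝ᵥ x'')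

section Helpers

variable {m n : ℕ}

lemma colNorm_pos {A : Matrix (Fin m) (Fin n) ℝ} {j : Fin n} (h : ∃ i, A i j ≠ 0) :
    0 < colNorm A j := by
  obtain ⟨i, hi⟩ := h
  apply Real.sqrt_pos.2
  have h1 : (0:ℝ) < A i j ^ 2 := by positivity
  exact lt_of_lt_of_le h1 (Finset.single_le_sum (f := fun i => A i j ^ 2)
    (fun i _ => sq_nonneg _) (mem_univ i))

lemma dot_split (A : Matrix (Fin m) (Fin n) ℝ) (y : Fin m → ℝ) (c x : Fin n → ℝ) :
    c ⬝ᵥ x = y ⬝ᵥ (A *ᵥ x) + (c - Aᵀ *ᵥ y) ⬝ᵥ x := by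
  rw [Matrix.dotProduct_mulVec, sub_dotProduct, ← Matrix.mulVec_transpose]
  ring

lemma zero_off_basis_eq {A : Matrix (Fin m) (Fin n) ℝ} {b : Fin m → ℝ}
    {bas : Fin m → Fin n} (hb : IsBasis A bas) {u w : Fin n → ℝ}
    (hu0 : ∀ j, j ∉ Set.range bas → u j = 0) (hw0 : ∀ j, j ∉ Set.range bas → w j = 0)
    (hu : A *ᵥ u = b) (hw : A *ᵥ w = b) : u = w := by
  classical
  obtain ⟨hinj, hunit⟩ := hb
  have key : ∀ z : Fin n → ℝ, (∀ j, j ∉ Set.range bas → z j = 0) →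
      A *ᵥ z = (A.submatrix id bas) *ᵥ (z ∘ bas) := by
    intro z hz
    funext i
    show ∑ j, A i j * z j = ∑ k, A i (bas k) * z (bas k)
    rw [← Finset.sum_image (f := fun j => A i j * z j) (g := bas) (by simp [hinj.eq_iff, hinj])]
    apply (Finset.sum_subset (Finset.subset_univ _) _).symm
    intro j _ hj
    have : j ∉ Set.range bas := by
      simp only [Finset.mem_image, Finset.mem_univ, true_and] at hj
      exact fun hr => hj ((Set.mem_range.mp hr).imp fun a ha => ha)
    rw [hz j this, mul_zero]
  have hinv := Matrix.invertibleOfIsUnitDet _ ((Matrix.isUnit_iff_isUnit_det _).mp hunit)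
  have hcomp : u ∘ bas = w ∘ bas := by
    have h1 : (A.submatrix id bas) *ᵥ (u ∘ bas) = (A.submatrix id bas) *ᵥ (w ∘ bas) := by
      rw [← key u hu0, ← key w hw0, hu, hw]
    have h2 := congrArg (fun v => (A.submatrix id bas)⁻¹ *ᵥ v) h1
    simpa [Matrix.mulVec_mulVec, Matrix.nonsing_inv_mul _
      ((Matrix.isUnit_iff_isUnit_det _).mp hunit)] using h2
  funext j
  by_cases hj : j ∈ Set.range bas
  · obtain ⟨k, rfl⟩ := hj
    exact congrFun hcomp k
  · rw [hu0 j hj, hw0 j hj]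

end Helpers

section Helpers2

variable {m n : ℕ}

lemma sum_le_of_basic {A : Matrix (Fin m) (Fin n) ℝ} {b : Fin m → ℝ} {v : Fin n → ℝ} {γ : ℝ}
    (hv : IsBasicFeasible A b v) (hγ : 0 ≤ γ) (hbound : ∀ j, 0 < v j → v j ≤ γ) :
    ∑ j, v j ≤ m * γ := by
  classical
  obtain ⟨⟨bas, hbas, hv0⟩, _, hvnn⟩ := hv
  have h1 : ∑ j, v j = ∑ k : Fin m, v (bas k) := by
    rw [← Finset.sum_image (f := v) (g := bas) (by simp [hbas.1.eq_iff, hbas.1])]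
    apply (Finset.sum_subset (Finset.subset_univ _) _).symm
    intro j _ hj
    apply hv0
    intro hr
    simp only [Finset.mem_image, Finset.mem_univ, true_and] at hj
    exact hj ((Set.mem_range.mp hr).imp fun a ha => ha)
  rw [h1]
  calc ∑ k : Fin m, v (bas k) ≤ ∑ _k : Fin m, γ := by
        apply Finset.sum_le_sum
        intro k _
        rcases eq_or_lt_of_le (hvnn (bas k)) with h | h
        · rw [← h]; exact hγ
        · exact hbound _ h
    _ = m * γ := by simp [mul_comm]

lemma exists_dot_separating {W : Submodule ℝ (Fin m → ℝ)} {a : Fin m → ℝ} (ha : a ∉ W) :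
    ∃ d : Fin m → ℝ, (∀ w ∈ W, d ⬝ᵥ w = 0) ∧ d ⬝ᵥ a ≠ 0 := by
  classical
  obtain ⟨f, hfa, hfW⟩ := W.exists_dual_map_eq_bot_of_notMem ha inferInstance
  refine ⟨fun i => f (Pi.single i 1), ?_, ?_⟩
  · intro w hw
    have : f w = 0 := by
      have : f w ∈ W.map f := Submodule.mem_map_of_mem hw
      rwa [hfW, Submodule.mem_bot] at this
    rw [← this]
    have hw' : w = ∑ i, w i • (Pi.single i 1 : Fin m → ℝ) := by
      funext j; simp [Pi.single_apply, Finset.sum_ite_eq']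
    conv_rhs => rw [hw']
    rw [map_sum]
    simp [dotProduct, mul_comm]
  · have haeq : a = ∑ i, a i • (Pi.single i 1 : Fin m → ℝ) := by
      funext j; simp [Pi.single_apply, Finset.sum_ite_eq']
    intro hcon
    apply hfa
    conv_lhs => rw [haeq]
    rw [map_sum]
    simpa [dotProduct, mul_comm] using hcon

end Helpers2

section SparseDual

variable {m n : ℕ}

/-- From any dual-optimal solution one can construct one whose slack vector has at
most `n - m` nonzero entries. -/
lemma exists_sparse_dual (A : Matrix (Fin m) (Fin n) ℝ) (c : Fin n → ℝ)
    (v : Fin n → ℝ) (hv : 0 ≤ v)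
    (hspan : Submodule.span ℝ (Set.range Aᵀ) = ⊤)
    (y0 : Fin m → ℝ) (h0 : 0 ≤ c - Aᵀ *ᵥ y0) (h0v : (c - Aᵀ *ᵥ y0) ⬝ᵥ v = 0) :
    ∃ y : Fin m → ℝ, 0 ≤ c - Aᵀ *ᵥ y ∧ (c - Aᵀ *ᵥ y) ⬝ᵥ v = 0 ∧
      (Finset.univ.filter (fun j => (c - Aᵀ *ᵥ y) j ≠ 0)).card ≤ n - m := by
  classical
  let col : Fin n → (Fin m → ℝ) := Aᵀ
  have hcol : col = Aᵀ := rfl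
  let Z : (Fin m → ℝ) → Finset (Fin n) := fun y => Finset.univ.filter (fun j => (c - Aᵀ *ᵥ y) j = 0)
  let W : (Fin m → ℝ) → Submodule ℝ (Fin m → ℝ) := fun y => Submodule.span ℝ (↑((Z y).image col))
  let Feas : (Fin m → ℝ) → Prop := fun y => 0 ≤ c - Aᵀ *ᵥ y ∧ (c - Aᵀ *ᵥ y) ⬝ᵥ v = 0
  -- membership in zero set implies support orthogonality facts
  have hWmem : ∀ y, ∀ j ∈ Z y, col j ∈ W y := by
    intro y j hj
    apply Submodule.subset_span
    simp only [Finset.coe_image, Set.mem_image, Finset.mem_coe]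
    exact ⟨j, hj, rfl⟩
  have hsx : ∀ (y : Fin m → ℝ) (e : Fin m → ℝ) (ρ : ℝ) (j : Fin n),
      (c - Aᵀ *ᵥ (y + ρ • e)) j = (c - Aᵀ *ᵥ y) j - ρ * (e ⬝ᵥ col j) := by
    intro y e ρ j
    simp only [Pi.sub_apply, Matrix.mulVec_add, Matrix.mulVec_smul, Pi.add_apply, Pi.smul_apply,
      smul_eq_mul]
    have : (Aᵀ *ᵥ e) j = e ⬝ᵥ col j := by
      simp [Matrix.mulVec, dotProduct, hcol, mul_comm]
    rw [this]; ring
  -- vanishing of slack on the support of v, for feasible y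
  have hZv : ∀ y, Feas y → ∀ j, 0 < v j → j ∈ Z y := by
    intro y hy j hj
    have hterms : ∀ j ∈ Finset.univ, 0 ≤ (c - Aᵀ *ᵥ y) j * v j :=
      fun j _ => mul_nonneg (hy.1 j) (hv j)
    have := (Finset.sum_eq_zero_iff_of_nonneg hterms).mp hy.2 j (Finset.mem_univ j)
    have hz : (c - Aᵀ *ᵥ y) j = 0 := by
      rcases mul_eq_zero.mp this with h | h
      · exact h
      · exact absurd h (ne_of_gt hj)
    simp only [Z, Finset.mem_filter, Finset.mem_univ, true_and]
    exact hz
  -- the exchange step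
  have step : ∀ y, Feas y → Module.finrank ℝ (W y) < m →
      ∃ y', Feas y' ∧ Module.finrank ℝ (W y) < Module.finrank ℝ (W y') := by
    intro y hy hr
    obtain ⟨hynn, hyv⟩ := hy
    -- a column outside W y
    have hex : ∃ j0 : Fin n, col j0 ∉ W y := by
      by_contra hcon
      push_neg at hcon
      have : Submodule.span ℝ (Set.range Aᵀ) ≤ W y := by
        rw [Submodule.span_le]
        rintro _ ⟨j, rfl⟩
        exact hcon j
      rw [hspan, top_le_iff] at this
      rw [this] at hr
      simp [Module.finrank_fin_fun] at hr
    obtain ⟨j0, hj0⟩ := hex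
    obtain ⟨d, hdW, hda⟩ := exists_dot_separating hj0
    -- orient d so that d ⬝ col j0 > 0
    obtain ⟨e, heW, hea⟩ : ∃ e : Fin m → ℝ, (∀ w ∈ W y, e ⬝ᵥ w = 0) ∧ 0 < e ⬝ᵥ col j0 := by
      rcases lt_or_gt_of_ne hda with h | h
      · exact ⟨-d, fun w hw => by rw [neg_dotProduct, hdW w hw, neg_zero],
          by rw [neg_dotProduct]; linarith⟩
      · exact ⟨d, hdW, h⟩
    set J : Finset (Fin n) := Finset.univ.filter (fun j => 0 < e ⬝ᵥ col j) with hJ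
    have hj0J : j0 ∈ J := by simp [hJ, hea]
    obtain ⟨j1, hj1J, hj1min⟩ := J.exists_min_image
      (fun j => (c - Aᵀ *ᵥ y) j / (e ⬝ᵥ col j)) ⟨j0, hj0J⟩
    have hj1pos : 0 < e ⬝ᵥ col j1 := by simpa [hJ] using hj1J
    set ρ : ℝ := (c - Aᵀ *ᵥ y) j1 / (e ⬝ᵥ col j1) with hρ
    have hρnn : 0 ≤ ρ := div_nonneg (hynn j1) hj1pos.le
    refine ⟨y + ρ • e, ⟨?_, ?_⟩, ?_⟩
    · -- nonnegativity
      intro j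
      rw [hsx y e ρ j]
      by_cases hpos : 0 < e ⬝ᵥ col j
      · have hjJ : j ∈ J := by simp [hJ, hpos]
        have h2 := (le_div_iff₀ hpos).mp (hj1min j hjJ)
        simp only [Pi.zero_apply]
        linarith
      · push_neg at hpos
        have : ρ * (e ⬝ᵥ col j) ≤ 0 := mul_nonpos_of_nonneg_of_nonpos hρnn hpos
        have := hynn j
        simp only [Pi.zero_apply] at this ⊢
        linarith
    · -- complementarity preserved
      apply Finset.sum_eq_zero
      intro j _
      rcases eq_or_lt_of_le (hv j) with h | h
      · rw [← h]; simp
      · have hjZ := hZv y ⟨hynn, hyv⟩ j h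
        have h1 : (c - Aᵀ *ᵥ y) j = 0 := by simpa [Z] using hjZ
        have h2 : e ⬝ᵥ col j = 0 := heW _ (hWmem y j hjZ)
        rw [hsx y e ρ j, h1, h2, mul_zero, sub_zero, zero_mul]
    · -- rank increase
      have hZsub : Z y ⊆ Z (y + ρ • e) := by
        intro j hj
        have h1 : (c - Aᵀ *ᵥ y) j = 0 := by simpa [Z] using hj
        have h2 : e ⬝ᵥ col j = 0 := heW _ (hWmem y j hj)
        have h3 : (c - Aᵀ *ᵥ (y + ρ • e)) j = 0 := by
          rw [hsx y e ρ j, h1, h2, mul_zero, sub_zero]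
        simp only [Z, Finset.mem_filter, Finset.mem_univ, true_and]
        simpa using h3
      have hj1Z : j1 ∈ Z (y + ρ • e) := by
        have h3 : (c - Aᵀ *ᵥ (y + ρ • e)) j1 = 0 := by
          rw [hsx y e ρ j1, hρ, div_mul_cancel₀ _ (ne_of_gt hj1pos), sub_self]
        simp only [Z, Finset.mem_filter, Finset.mem_univ, true_and]
        simpa using h3
      have hWle : W y ≤ W (y + ρ • e) := by
        apply Submodule.span_mono
        intro w hw
        simp only [Finset.coe_image, Set.mem_image, Finset.mem_coe] at hw ⊢
        obtain ⟨j, hj, rfl⟩ := hw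
        exact ⟨j, hZsub hj, rfl⟩
      have hj1W : col j1 ∉ W y := fun hmem => absurd (heW _ hmem) (ne_of_gt hj1pos)
      have hj1W' : col j1 ∈ W (y + ρ • e) := hWmem _ j1 hj1Z
      exact Submodule.finrank_lt_finrank_of_lt (lt_of_le_of_ne hWle
        (fun heq => hj1W (heq ▸ hj1W')))
  -- iterate the exchange step
  have iter : ∀ k : ℕ, ∃ y, Feas y ∧ (m ≤ Module.finrank ℝ (W y) ∨ k ≤ Module.finrank ℝ (W y)) := by
    intro k
    induction k with
    | zero => exact ⟨y0, ⟨h0, h0v⟩, Or.inr (Nat.zero_le _)⟩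
    | succ k ih =>
      obtain ⟨y, hy, hk⟩ := ih
      by_cases hm : m ≤ Module.finrank ℝ (W y)
      · exact ⟨y, hy, Or.inl hm⟩
      · push_neg at hm
        obtain ⟨y', hy', hlt⟩ := step y hy hm
        rcases hk with h | h
        · omega
        · exact ⟨y', hy', Or.inr (by omega)⟩
  obtain ⟨y, hy, hk⟩ := iter m
  have hrk : m ≤ Module.finrank ℝ (W y) := by rcases hk with h | h <;> exact h
  have hcard : m ≤ (Z y).card := by
    calc m ≤ Module.finrank ℝ (W y) := hrk
      _ ≤ ((Z y).image col).card := finrank_span_finset_le_card _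
      _ ≤ (Z y).card := Finset.card_image_le
  refine ⟨y, hy.1, hy.2, ?_⟩
  have hcard' : m ≤ (Finset.univ.filter (fun j => (c - Aᵀ *ᵥ y) j = 0)).card := hcard
  have hZcard : (Finset.univ.filter (fun j => (c - Aᵀ *ᵥ y) j = 0)).card +
      (Finset.univ.filter (fun j => (c - Aᵀ *ᵥ y) j ≠ 0)).card = n := by
    simpa using Finset.card_filter_add_card_filter_not
      (s := Finset.univ (α := Fin n)) (p := fun j => (c - Aᵀ *ᵥ y) j = 0)
  have hgoal : (Finset.univ.filter (fun j => (c - Aᵀ *ᵥ y) j ≠ 0)).card ≤ n - m := by omega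
  exact hgoal

end SparseDual


set_option maxHeartbeats 2000000 in
/-- Theorem 2 of the paper: the simplex method with the largest distance rule applied to
`min c⬝x s.t. A x = b, x ≥ 0` (with `rank A = m`, primal and dual optimal basic
solutions existing, and a non-optimal initial BFS) generates at most
`(n − m) ⌈(mγ/(βδ)) log(mγ/δ)⌉` different (non-optimal) basic feasible solutions, where
`⌈r⌉` is the smallest integer greater than `r`. -/
theorem largest_distance_bound_without_objective {m n : ℕ} [NeZero n]
    (hm : 0 < m) (hmn : m < n)
    (A : Matrix (Fin m) (Fin n) ℝ) (b : Fin m → ℝ) (c : Fin n → ℝ)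
    (hrank : A.rank = m)
    (hcols : ∀ j : Fin n, ∃ i : Fin m, A i j ≠ 0)
    (β δ γ : ℝ)
    (hβ : β = (Finset.univ.inf' Finset.univ_nonempty fun j => colNorm A j) /
      (Finset.univ.sup' Finset.univ_nonempty fun j => colNorm A j))
    (hδ : 0 < δ)
    (hδγ : ∀ v, IsBasicFeasible A b v → ∀ j, 0 < v j → δ ≤ v j ∧ v j ≤ γ)
    (zstar : ℝ)
    (hzatt : ∃ v, IsBasicFeasible A b v ∧ c ⬝ᵥ v = zstar)
    (hzopt : ∀ v, A *ᵥ v = b → 0 ≤ v → zstar ≤ c ⬝ᵥ v)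
    (hdualopt : ∃ (y : Fin m → ℝ) (s : Fin n → ℝ),
      Aᵀ *ᵥ y + s = c ∧ 0 ≤ s ∧ b ⬝ᵥ y = zstar)
    (x : ℕ → Fin n → ℝ)
    (hBFS : ∀ t, IsBasicFeasible A b (x t))
    (hstep : ∀ t, x (t + 1) = x t ∨ LDPivot A b c (x t) (x (t + 1)))
    (hx0 : zstar < c ⬝ᵥ x 0) :
    Set.ncard {v : Fin n → ℝ | (∃ t, x t = v) ∧ zstar < c ⬝ᵥ v} ≤
      (n - m) * (⌊(m * γ / (β * δ)) * Real.log (m * γ / δ)⌋₊ + 1) := by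
  classical
  obtain ⟨v, hvBFS, hvz⟩ := hzatt
  set S : Set (Fin n → ℝ) := {v | (∃ t, x t = v) ∧ zstar < c ⬝ᵥ v} with hSdef
  by_cases hfin : S.Finite
  swap
  · rw [Set.Infinite.ncard (by simpa using hfin)]; exact Nat.zero_le _
  -- column norm bounds
  set L := (Finset.univ.inf' Finset.univ_nonempty fun j => colNorm A j) with hLdef
  set U := (Finset.univ.sup' Finset.univ_nonempty fun j => colNorm A j) with hUdef
  have hNge : ∀ j, L ≤ colNorm A j := fun j => Finset.inf'_le _ (Finset.mem_univ j)
  have hNle : ∀ j, colNorm A j ≤ U := fun j => Finset.le_sup' _ (Finset.mem_univ j)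
  have hLpos : 0 < L := by
    rw [hLdef, Finset.lt_inf'_iff]
    exact fun j _ => colNorm_pos (hcols j)
  have hUpos : 0 < U := lt_of_lt_of_le hLpos (le_trans (hNge (Classical.arbitrary _)) (hNle _))
  have hβpos : 0 < β := hβ ▸ div_pos hLpos hUpos
  have hβ1 : β ≤ 1 := by
    rw [hβ]
    exact div_le_one_of_le₀ (le_trans (hNge (Classical.arbitrary _)) (hNle _)) hUpos.le
  -- positivity of γ
  have hγδ : δ ≤ γ := by
    have hwit : ∃ (w : Fin n → ℝ) (j : Fin n), IsBasicFeasible A b w ∧ 0 < w j := by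
      by_cases h0 : x 0 = 0
      · have hz0 : c ⬝ᵥ x 0 = 0 := by rw [h0]; simp
        have hvne : v ≠ 0 := by
          intro hv0
          rw [hv0] at hvz
          simp at hvz
          rw [hz0] at hx0
          linarith
        have : ∃ j, v j ≠ 0 := by
          by_contra hc; push_neg at hc
          exact hvne (funext hc)
        obtain ⟨j, hj⟩ := this
        exact ⟨v, j, hvBFS, lt_of_le_of_ne (hvBFS.2.2 j) (Ne.symm hj)⟩
      · have : ∃ j, x 0 j ≠ 0 := by
          by_contra hc; push_neg at hc
          exact h0 (funext hc)
        obtain ⟨j, hj⟩ := this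
        exact ⟨x 0, j, hBFS 0, lt_of_le_of_ne ((hBFS 0).2.2 j) (Ne.symm hj)⟩
    obtain ⟨w, j, hw, hwpos⟩ := hwit
    have := hδγ w hw j hwpos
    linarith
  have hγpos : 0 < γ := lt_of_lt_of_le hδ hγδ
  have hm1 : (1:ℝ) ≤ (m:ℝ) := by exact_mod_cast hm
  have hmγ : 0 < (m:ℝ) * γ := by positivity
  obtain ⟨q, hqdef⟩ : ∃ q : ℝ, q = 1 - β * δ / ((m:ℝ) * γ) := ⟨_, rfl⟩
  have hq0 : 0 ≤ q := by
    rw [hqdef]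
    have h1 : β * δ ≤ (m:ℝ) * γ := by nlinarith
    have h2 : β * δ / ((m:ℝ) * γ) ≤ 1 := (div_le_one hmγ).2 h1
    linarith
  have hq1 : q < 1 := by
    rw [hqdef]
    have : 0 < β * δ / ((m:ℝ) * γ) := by positivity
    linarith
  -- span of the columns
  have hspan : Submodule.span ℝ (Set.range Aᵀ) = ⊤ := by
    apply Submodule.eq_top_of_finrank_eq
    have h := A.rank_eq_finrank_span_cols
    rw [hrank] at h
    rw [Module.finrank_fin_fun]
    exact h.symm
  -- the sparse dual optimal slack
  obtain ⟨y0, s0, hys0, hs0nn, hby0⟩ := hdualopt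
  have hs0 : s0 = c - Aᵀ *ᵥ y0 := eq_sub_of_add_eq' hys0
  have h0nn : 0 ≤ c - Aᵀ *ᵥ y0 := hs0 ▸ hs0nn
  have hvb : A *ᵥ v = b := hvBFS.2.1
  have h0v : (c - Aᵀ *ᵥ y0) ⬝ᵥ v = 0 := by
    have h1 := dot_split A y0 c v
    rw [hvb, hvz] at h1
    have h2 : y0 ⬝ᵥ b = zstar := by rw [dotProduct_comm]; exact hby0
    linarith
  obtain ⟨ys, hsnn, hsv, hscard⟩ := exists_sparse_dual A c v hvBFS.2.2 hspan y0 h0nn h0v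
  set s : Fin n → ℝ := c - Aᵀ *ᵥ ys with hs
  have hysb : ys ⬝ᵥ b = zstar := by
    have h1 := dot_split A ys c v
    rw [hvb, hvz, hsv] at h1
    linarith
  have hgapeq : ∀ w, A *ᵥ w = b → c ⬝ᵥ w - zstar = s ⬝ᵥ w := by
    intro w hw
    have h1 := dot_split A ys c w
    rw [hw, hysb] at h1
    linarith
  have hgnn : ∀ t, 0 ≤ c ⬝ᵥ x t - zstar :=
    fun t => sub_nonneg.2 (hzopt _ (hBFS t).2.1 (hBFS t).2.2)
  have hsum : ∀ t, ∑ j, x t j ≤ (m:ℝ) * γ :=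
    fun t => sum_le_of_basic (hBFS t) hγpos.le (fun j hj => (hδγ _ (hBFS t) j hj).2)
  -- the key pivot estimate
  have pivKey : ∀ t, x (t+1) ≠ x t →
      c ⬝ᵥ x (t+1) - zstar ≤ q * (c ⬝ᵥ x t - zstar) ∧ c ⬝ᵥ x (t+1) < c ⬝ᵥ x t := by
    intro t hne
    rcases hstep t with heq | hpiv
    · exact absurd heq hne
    obtain ⟨bas, y, jl, hbas, hx0b, hxb, hxnn, hyB, hjlnb, hjlneg, hrule,
      hx'b, hx'nn, hx'0, hmin⟩ := hpiv
    set cbar : Fin n → ℝ := fun j => c j - (Aᵀ *ᵥ y) j with hcbar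
    have hcbarneg : cbar jl < 0 := hjlneg
    have hbasz : ∀ i, cbar (bas i) = 0 := by
      intro i
      have h1 := congrFun hyB i
      have h2 : ((A.submatrix id bas)ᵀ *ᵥ y) i = (Aᵀ *ᵥ y) (bas i) := by
        simp [Matrix.mulVec, Matrix.transpose_apply, Matrix.submatrix_apply, dotProduct]
      rw [h2] at h1
      simp [hcbar, h1]
    have hsplit : ∀ w, A *ᵥ w = b → c ⬝ᵥ w = y ⬝ᵥ b + (c - Aᵀ *ᵥ y) ⬝ᵥ w := by
      intro w hw
      rw [dot_split A y c w, hw]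
    have hzero : ∀ (z : Fin n → ℝ), (∀ j, j ∉ Set.range bas → j ≠ jl → z j = 0) →
        (c - Aᵀ *ᵥ y) ⬝ᵥ z = cbar jl * z jl := by
      intro z hz
      rw [show (c - Aᵀ *ᵥ y) ⬝ᵥ z = ∑ j, (c - Aᵀ *ᵥ y) j * z j from rfl]
      rw [Finset.sum_eq_single jl]
      · rfl
      · intro j _ hj
        by_cases hjb : j ∈ Set.range bas
        · obtain ⟨i, rfl⟩ := hjb
          rw [show ((c - Aᵀ *ᵥ y) (bas i) : ℝ) = cbar (bas i) from rfl, hbasz, zero_mul]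
        · rw [hz j hjb hj, mul_zero]
      · intro h; exact absurd (Finset.mem_univ jl) h
    have hcx : c ⬝ᵥ x t = y ⬝ᵥ b := by
      rw [hsplit (x t) hxb, hzero (x t) (fun j hj _ => hx0b j hj), hx0b jl hjlnb,
        mul_zero, add_zero]
    have hcx' : c ⬝ᵥ x (t+1) = y ⬝ᵥ b + cbar jl * x (t+1) jl := by
      rw [hsplit _ hx'b, hzero _ hx'0]
    have hx'pos : 0 < x (t+1) jl := by
      rcases eq_or_lt_of_le (hx'nn jl) with h | h
      · exfalso
        apply hne
        apply zero_off_basis_eq hbas _ hx0b hx'b hxb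
        intro j hj
        by_cases hjl : j = jl
        · rw [hjl, ← h]; rfl
        · exact hx'0 j hj hjl
      · exact h
    have hx'δ : δ ≤ x (t+1) jl := (hδγ _ (hBFS (t+1)) jl hx'pos).1
    have hdecobj : c ⬝ᵥ x (t+1) < c ⬝ᵥ x t := by
      rw [hcx, hcx']
      nlinarith [hcbarneg, hx'pos]
    refine ⟨?_, hdecobj⟩
    -- reduced cost comparison via the largest distance rule
    have hrule' : ∀ j, - cbar j ≤ (- cbar jl) / β := by
      intro j
      have hnum : 0 ≤ -cbar jl := by linarith
      by_cases hjb : j ∈ Set.range bas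
      · obtain ⟨i, rfl⟩ := hjb
        rw [hbasz i, neg_zero]
        positivity
      · have h1 := hrule j hjb
        have hNj : 0 < colNorm A j := colNorm_pos (hcols j)
        have hNjl : 0 < colNorm A jl := colNorm_pos (hcols jl)
        have h2 : -cbar j / colNorm A j ≤ -cbar jl / colNorm A jl := by
          have := neg_le_neg h1
          rw [← neg_div, ← neg_div] at this
          exact this
        have h3 : -cbar j ≤ colNorm A j * (-cbar jl / colNorm A jl) := by
          have := (div_le_iff₀ hNj).mp h2
          linarith [this]
        have h4 : -cbar jl / colNorm A jl ≤ -cbar jl / L :=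
          div_le_div_of_nonneg_left hnum hLpos (hNge jl)
        have h5 : colNorm A j * (-cbar jl / colNorm A jl) ≤ U * (-cbar jl / L) := by
          apply mul_le_mul (hNle j) h4 (by positivity) hUpos.le
        have h6 : U * (-cbar jl / L) = (-cbar jl) / β := by
          rw [hβ, div_div_eq_mul_div]
          ring
        linarith
    -- gap upper bound in terms of the entering reduced cost
    have hvsum : ∑ j, v j ≤ (m:ℝ) * γ :=
      sum_le_of_basic hvBFS hγpos.le (fun j hj => (hδγ v hvBFS j hj).2)
    have hgap1 : c ⬝ᵥ x t - zstar = ∑ j, (- cbar j) * v j := by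
      have hvz' : zstar = y ⬝ᵥ b + (c - Aᵀ *ᵥ y) ⬝ᵥ v := by
        rw [← hvz]; exact hsplit v hvb
      rw [hcx, hvz']
      rw [show ((c - Aᵀ *ᵥ y) ⬝ᵥ v : ℝ) = ∑ j, cbar j * v j from rfl]
      have hneg : ∑ j, (- cbar j) * v j = - ∑ j, cbar j * v j := by
        rw [← Finset.sum_neg_distrib]
        exact Finset.sum_congr rfl (fun j _ => by ring)
      rw [hneg]
      ring
    have hgembd : c ⬝ᵥ x t - zstar ≤ (- cbar jl) / β * ((m:ℝ) * γ) := by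
      rw [hgap1]
      calc ∑ j, (-cbar j) * v j ≤ ∑ j, ((-cbar jl)/β) * v j :=
            Finset.sum_le_sum (fun j _ => mul_le_mul_of_nonneg_right (hrule' j) (hvBFS.2.2 j))
        _ = ((-cbar jl)/β) * ∑ j, v j := by rw [Finset.mul_sum]
        _ ≤ ((-cbar jl)/β) * ((m:ℝ) * γ) := by
            apply mul_le_mul_of_nonneg_left hvsum
            have : 0 ≤ -cbar jl := by linarith
            positivity
    -- combine
    have hapos : 0 < - cbar jl := by linarith
    have hstep1 : (- cbar jl) * δ ≤ (c ⬝ᵥ x t - zstar) - (c ⬝ᵥ x (t+1) - zstar) := by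
      have h1 : (c ⬝ᵥ x t - zstar) - (c ⬝ᵥ x (t+1) - zstar) = (- cbar jl) * x (t+1) jl := by
        rw [hcx, hcx']; ring
      rw [h1]
      exact mul_le_mul_of_nonneg_left hx'δ hapos.le
    have h1 : (c ⬝ᵥ x t - zstar) * β ≤ (- cbar jl) * ((m:ℝ) * γ) := by
      have h2 := mul_le_mul_of_nonneg_right hgembd hβpos.le
      calc (c ⬝ᵥ x t - zstar) * β ≤ (- cbar jl) / β * ((m:ℝ)*γ) * β := h2
        _ = (- cbar jl) * ((m:ℝ)*γ) := by field_simp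
    have h2 : β * δ * (c ⬝ᵥ x t - zstar) ≤
        ((c ⬝ᵥ x t - zstar) - (c ⬝ᵥ x (t+1) - zstar)) * ((m:ℝ) * γ) := by
      calc β * δ * (c ⬝ᵥ x t - zstar) = δ * ((c ⬝ᵥ x t - zstar) * β) := by ring
        _ ≤ δ * ((- cbar jl) * ((m:ℝ)*γ)) := mul_le_mul_of_nonneg_left h1 hδ.le
        _ = ((- cbar jl) * δ) * ((m:ℝ)*γ) := by ring
        _ ≤ ((c ⬝ᵥ x t - zstar) - (c ⬝ᵥ x (t+1) - zstar)) * ((m:ℝ)*γ) :=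
            mul_le_mul_of_nonneg_right hstep1 hmγ.le
    have h3 : β * δ * (c ⬝ᵥ x t - zstar) / ((m:ℝ)*γ) ≤
        (c ⬝ᵥ x t - zstar) - (c ⬝ᵥ x (t+1) - zstar) := by
      rw [div_le_iff₀ hmγ]
      exact h2
    have h4 : q * (c ⬝ᵥ x t - zstar) =
        (c ⬝ᵥ x t - zstar) - β * δ * (c ⬝ᵥ x t - zstar) / ((m:ℝ)*γ) := by
      rw [hqdef]; ring
    linarith only [h3, h4]
  -- monotonicity of objective values
  have hmono1 : ∀ t, c ⬝ᵥ x (t+1) ≤ c ⬝ᵥ x t := by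
    intro t
    by_cases hne : x (t+1) = x t
    · rw [hne]
    · exact (pivKey t hne).2.le
  have hmono : ∀ a b', a ≤ b' → c ⬝ᵥ x b' ≤ c ⬝ᵥ x a := by
    intro a b' hab
    obtain ⟨d, rfl⟩ := Nat.exists_eq_add_of_le hab
    clear hab
    induction d with
    | zero => simp
    | succ d ih => exact le_trans (hmono1 (a+d)) ih
  -- a change exists between times with different states
  have hconst : ∀ a k, (∀ u, a ≤ u → u < a + k → x (u+1) = x u) → x (a+k) = x a := by
    intro a k
    induction k with
    | zero => intro _; rfl
    | succ k ih =>
      intro h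
      have h1 : x (a+k+1) = x (a+k) := h (a+k) (Nat.le_add_right _ _) (by omega)
      rw [show a + (k+1) = a + k + 1 from rfl, h1]
      exact ih (fun u hu hu' => h u hu (by omega))
  have hchange : ∀ a b', a ≤ b' → x a ≠ x b' → ∃ u, a ≤ u ∧ u < b' ∧ x (u+1) ≠ x u := by
    intro a b' hab hne
    by_contra hcon
    push_neg at hcon
    obtain ⟨d, rfl⟩ := Nat.exists_eq_add_of_le hab
    exact hne (hconst a d (fun u hu hu' => hcon u hu hu')).symm
  -- geometric decay beats the threshold
  set K : ℕ := ⌊((m:ℝ) * γ / (β * δ)) * Real.log ((m:ℝ) * γ / δ)⌋₊ + 1 with hKdef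
  have hqK : q ^ K < δ / ((m:ℝ) * γ) := by
    have hr1 : (1:ℝ) ≤ (m:ℝ) * γ / δ := by
      rw [le_div_iff₀ hδ]
      nlinarith
    have hlog : 0 ≤ Real.log ((m:ℝ)*γ/δ) := Real.log_nonneg hr1
    have hKgt : ((m:ℝ)*γ/(β*δ)) * Real.log ((m:ℝ)*γ/δ) < (K:ℝ) := by
      rw [hKdef]
      push_cast
      exact Nat.lt_floor_add_one _
    have hlt : Real.log ((m:ℝ)*γ/δ) < β*δ/((m:ℝ)*γ) * K := by
      have h1 : (β*δ/((m:ℝ)*γ)) * (((m:ℝ)*γ/(β*δ)) * Real.log ((m:ℝ)*γ/δ))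
          = Real.log ((m:ℝ)*γ/δ) := by
        field_simp
      calc Real.log ((m:ℝ)*γ/δ)
          = (β*δ/((m:ℝ)*γ)) * (((m:ℝ)*γ/(β*δ)) * Real.log ((m:ℝ)*γ/δ)) := h1.symm
        _ < (β*δ/((m:ℝ)*γ)) * K := mul_lt_mul_of_pos_left hKgt (by positivity)
    have h1 : q ≤ Real.exp (-(β*δ/((m:ℝ)*γ))) := by
      have h2 := Real.add_one_le_exp (-(β*δ/((m:ℝ)*γ)))
      rw [hqdef]; linarith
    have h2 : q ^ K ≤ Real.exp (-(β*δ/((m:ℝ)*γ))) ^ K := pow_le_pow_left₀ hq0 h1 K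
    have h3 : Real.exp (-(β*δ/((m:ℝ)*γ))) ^ K = Real.exp ((K:ℕ) * (-(β*δ/((m:ℝ)*γ)))) :=
      (Real.exp_nat_mul _ K).symm
    have h4 : (K:ℝ) * (-(β*δ/((m:ℝ)*γ))) < Real.log (δ/((m:ℝ)*γ)) := by
      have h5 : Real.log (δ/((m:ℝ)*γ)) = - Real.log ((m:ℝ)*γ/δ) := by
        rw [show δ/((m:ℝ)*γ) = (((m:ℝ)*γ)/δ)⁻¹ by rw [inv_div], Real.log_inv]
      rw [h5]
      nlinarith [hlt]
    have h6 : Real.exp ((K:ℕ) * (-(β*δ/((m:ℝ)*γ)))) < δ/((m:ℝ)*γ) := by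
      rw [← Real.exp_log (show (0:ℝ) < δ/((m:ℝ)*γ) by positivity)]
      exact Real.exp_lt_exp.2 h4
    calc q ^ K ≤ _ := h2
      _ = _ := h3
      _ < _ := h6
  -- final counting
  by_contra hcon
  push_neg at hcon
  set N := S.ncard with hNdef
  -- first visit times of the elements of S
  let F : (Fin n → ℝ) → ℕ := fun w => if h : ∃ t, x t = w then Nat.find h else 0
  have hxF : ∀ w ∈ S, x (F w) = w := by
    intro w hw
    have hex : ∃ t, x t = w := hw.1
    simp only [F, dif_pos hex]
    exact Nat.find_spec hex
  let T : Finset ℕ := hfin.toFinset.image F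
  have hTcard : T.card = N := by
    rw [hNdef, Set.ncard_eq_toFinset_card S hfin]
    apply Finset.card_image_of_injOn
    intro w hw w' hw' hww
    rw [← hxF w (by simpa using hw), ← hxF w' (by simpa using hw'), hww]
  let e := T.orderIsoOfFin hTcard
  let tt : Fin N → ℕ := fun i => (e i : ℕ)
  have htmono : StrictMono tt := fun a b' hab => e.strictMono hab
  have htS : ∀ i, x (tt i) ∈ S ∧ F (x (tt i)) = tt i := by
    intro i
    have hmem : (e i : ℕ) ∈ T := (e i).2
    simp only [T, Finset.mem_image, Set.Finite.mem_toFinset] at hmem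
    obtain ⟨w, hwS, hFw⟩ := hmem
    have hxw : x (F w) = w := hxF w hwS
    have h1 : tt i = F w := hFw.symm
    constructor
    · rw [h1, hxw]; exact hwS
    · rw [h1, hxw, ← h1, h1]
  have hgpos : ∀ i : Fin N, 0 < c ⬝ᵥ x (tt i) - zstar :=
    fun i => sub_pos.2 (htS i).1.2
  have hgd : ∀ i i' : Fin N, i < i' →
      c ⬝ᵥ x (tt i') - zstar ≤ q * (c ⬝ᵥ x (tt i) - zstar) := by
    intro i i' h
    have hne : x (tt i) ≠ x (tt i') := by
      intro heq
      have h1 : tt i = tt i' := by rw [← (htS i).2, ← (htS i').2, heq]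
      exact absurd h1 (ne_of_lt (htmono h))
    obtain ⟨u, hu1, hu2, hu3⟩ := hchange (tt i) (tt i') (le_of_lt (htmono h)) hne
    have hk := (pivKey u hu3).1
    have m1 : c ⬝ᵥ x (tt i') ≤ c ⬝ᵥ x (u+1) := hmono (u+1) (tt i') (by omega)
    have m2 : c ⬝ᵥ x u ≤ c ⬝ᵥ x (tt i) := hmono (tt i) u hu1
    have m3 : q * (c ⬝ᵥ x u - zstar) ≤ q * (c ⬝ᵥ x (tt i) - zstar) :=
      mul_le_mul_of_nonneg_left (by linarith) hq0
    linarith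
  have hgpow : ∀ (d : ℕ) (i i' : Fin N), (i:ℕ) + d ≤ (i':ℕ) →
      c ⬝ᵥ x (tt i') - zstar ≤ q ^ d * (c ⬝ᵥ x (tt i) - zstar) := by
    intro d
    induction d with
    | zero =>
      intro i i' h
      have h1 : c ⬝ᵥ x (tt i') ≤ c ⬝ᵥ x (tt i) :=
        hmono _ _ (htmono.monotone (show i ≤ i' by exact_mod_cast h))
      rw [pow_zero, one_mul]
      linarith
    | succ d ih =>
      intro i i' h
      have hlt : (i:ℕ) + d < N := by omega
      have h1 := ih i ⟨(i:ℕ)+d, hlt⟩ (le_refl _)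
      have h2 := hgd ⟨(i:ℕ)+d, hlt⟩ i' (by rw [Fin.lt_def]; simp; omega)
      calc c ⬝ᵥ x (tt i') - zstar ≤ q * (c ⬝ᵥ x (tt ⟨(i:ℕ)+d, hlt⟩) - zstar) := h2
        _ ≤ q * (q^d * (c ⬝ᵥ x (tt i) - zstar)) := mul_le_mul_of_nonneg_left h1 hq0
        _ = q^(d+1) * (c ⬝ᵥ x (tt i) - zstar) := by ring
  -- variable fixing
  have hfix : ∀ i : Fin N, ∃ j : Fin n, s j ≠ 0 ∧ 0 < x (tt i) j ∧
      ∀ i' : Fin N, (i:ℕ) + K ≤ (i':ℕ) → x (tt i') j = 0 := by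
    intro i
    have hgi : c ⬝ᵥ x (tt i) - zstar = s ⬝ᵥ x (tt i) := hgapeq _ (hBFS _).2.1
    have hterm : ∀ j, 0 ≤ s j * x (tt i) j :=
      fun j => mul_nonneg (hsnn j) ((hBFS (tt i)).2.2 j)
    have hne : ∃ j, 0 < s j * x (tt i) j := by
      by_contra hc
      push_neg at hc
      have hz : s ⬝ᵥ x (tt i) = 0 := le_antisymm
        (Finset.sum_nonpos (fun j _ => hc j)) (Finset.sum_nonneg fun j _ => hterm j)
      have := hgpos i
      rw [hgi, hz] at this
      exact lt_irrefl _ this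
    obtain ⟨j2, hj2⟩ := hne
    have hj2x : 0 < x (tt i) j2 := by
      rcases eq_or_lt_of_le ((hBFS (tt i)).2.2 j2) with h | h
      · rw [← h] at hj2; simp at hj2
      · exact h
    have hj2s : 0 < s j2 := by
      rcases eq_or_lt_of_le (hsnn j2) with h | h
      · exfalso; rw [← h] at hj2; simp at hj2
      · exact h
    obtain ⟨jstar, hjstarJ, hjmax⟩ := (Finset.univ.filter
      (fun j => 0 < x (tt i) j)).exists_max_image s ⟨j2, by simp [hj2x]⟩
    have hjstarpos : 0 < x (tt i) jstar := by simpa using hjstarJ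
    have hMpos : 0 < s jstar := lt_of_lt_of_le hj2s (hjmax j2 (by simp [hj2x]))
    have hgM : c ⬝ᵥ x (tt i) - zstar ≤ s jstar * ((m:ℝ) * γ) := by
      rw [hgi]
      calc s ⬝ᵥ x (tt i) = ∑ j, s j * x (tt i) j := rfl
        _ ≤ ∑ j, s jstar * x (tt i) j := by
            apply Finset.sum_le_sum
            intro j _
            rcases eq_or_lt_of_le ((hBFS (tt i)).2.2 j) with h | h
            · rw [← h]; simp
            · have hj : 0 < x (tt i) j := by simpa using h
              exact mul_le_mul_of_nonneg_right (hjmax j (by simp [hj])) hj.le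
        _ = s jstar * ∑ j, x (tt i) j := by rw [Finset.mul_sum]
        _ ≤ s jstar * ((m:ℝ)*γ) := mul_le_mul_of_nonneg_left (hsum (tt i)) hMpos.le
    refine ⟨jstar, ne_of_gt hMpos, hjstarpos, ?_⟩
    intro i' hii'
    by_contra hxne
    have hxpos : 0 < x (tt i') jstar :=
      lt_of_le_of_ne ((hBFS (tt i')).2.2 jstar) (Ne.symm hxne)
    have hxδ : δ ≤ x (tt i') jstar := (hδγ _ (hBFS _) jstar hxpos).1
    have hterm' : ∀ j ∈ Finset.univ, 0 ≤ s j * x (tt i') j :=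
      fun j _ => mul_nonneg (hsnn j) ((hBFS (tt i')).2.2 j)
    have hlow : s jstar * δ ≤ c ⬝ᵥ x (tt i') - zstar := by
      rw [hgapeq _ (hBFS (tt i')).2.1]
      calc s jstar * δ ≤ s jstar * x (tt i') jstar :=
            mul_le_mul_of_nonneg_left hxδ hMpos.le
        _ ≤ ∑ j, s j * x (tt i') j :=
            Finset.single_le_sum hterm' (Finset.mem_univ jstar)
        _ = s ⬝ᵥ x (tt i') := rfl
    have hup : c ⬝ᵥ x (tt i') - zstar ≤ q ^ K * (c ⬝ᵥ x (tt i) - zstar) := hgpow K i i' hii'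
    have h1 : q ^ K * (c ⬝ᵥ x (tt i) - zstar) < δ/((m:ℝ)*γ) * (c ⬝ᵥ x (tt i) - zstar) :=
      mul_lt_mul_of_pos_right hqK (hgpos i)
    have h2 : δ/((m:ℝ)*γ) * (c ⬝ᵥ x (tt i) - zstar) ≤ s jstar * δ := by
      calc δ/((m:ℝ)*γ) * (c ⬝ᵥ x (tt i) - zstar)
          ≤ δ/((m:ℝ)*γ) * (s jstar * ((m:ℝ)*γ)) :=
            mul_le_mul_of_nonneg_left hgM (by positivity)
        _ = s jstar * δ := by field_simp
    linarith
  -- pigeonhole on the support of s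
  have hK1 : 1 ≤ K := Nat.le_add_left 1 _
  have hik : ∀ r : Fin (n - m + 1), (r:ℕ) * K < N := by
    intro r
    have hr : (r:ℕ) ≤ n - m := Nat.lt_succ_iff.mp r.2
    have h1 : (r:ℕ) * K ≤ (n-m) * K := Nat.mul_le_mul_right K hr
    omega
  let idx : Fin (n - m + 1) → Fin N := fun r => ⟨(r:ℕ)*K, hik r⟩
  let JJ : Fin (n - m + 1) → Fin n := fun r => (hfix (idx r)).choose
  have hJJ : ∀ r, s (JJ r) ≠ 0 ∧ 0 < x (tt (idx r)) (JJ r) ∧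
      ∀ i' : Fin N, ((idx r):ℕ) + K ≤ (i':ℕ) → x (tt i') (JJ r) = 0 :=
    fun r => (hfix (idx r)).choose_spec
  have hinj' : ∀ r r' : Fin (n - m + 1), r < r' → JJ r ≠ JJ r' := by
    intro r r' hrr' heq
    have hle : ((idx r):ℕ) + K ≤ ((idx r'):ℕ) := by
      show (r:ℕ)*K + K ≤ (r':ℕ)*K
      have : (r:ℕ) + 1 ≤ (r':ℕ) := hrr'
      calc (r:ℕ)*K + K = ((r:ℕ)+1)*K := by ring
        _ ≤ (r':ℕ)*K := Nat.mul_le_mul_right K this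
    have hzero := (hJJ r).2.2 (idx r') hle
    have hpos := (hJJ r').2.1
    rw [← heq] at hpos
    rw [hzero] at hpos
    exact lt_irrefl _ hpos
  have hinj : Function.Injective JJ := by
    intro r r' heq
    by_contra hne'
    rcases lt_or_gt_of_ne hne' with h | h
    · exact hinj' r r' h heq
    · exact hinj' r' r h heq.symm
  have hcard2 : n - m + 1 ≤ (Finset.univ.filter (fun j => s j ≠ 0)).card := by
    calc n - m + 1 = (Finset.univ : Finset (Fin (n - m + 1))).card := by simp
      _ ≤ (Finset.univ.filter (fun j => s j ≠ 0)).card := by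
          apply Finset.card_le_card_of_injOn JJ
          · intro r _
            simp only [Finset.mem_coe, Finset.mem_filter, Finset.mem_univ, true_and]
            exact (hJJ r).1
          · exact hinj.injOn
  omega
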